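/- Let (a_n), (b_n) be real sequences with a_n > 0 for all n, such that b_n/a_n is non-increasing and converges to L, and sup_n (1/n) Σ_{k=1}^n |a_{k+1}-a_k| = C < ∞. Then for each k, the positive part [b'_k - L a'_k]_+ satisfies [b'_k - L a'_k]_+ ≤ (b_k/a_k - L)|a'_k|, where a'_k = a_{k+1}-a_k and b'_k = b_{k+1}-b_k; consequently lim_{n→∞} (1/n) Σ_{k=1}^n [b'_k - L a'_k]_+ = 0. -/

import Mathlib

open Filter Finset

/-- Cesàro averages of `c k * x k` tend to `0` when `c → 0`, everything is
nonnegative, and the Cesàro sums of `x` are bounded. -/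
lemma cesaro_null_aux (x c : ℕ → ℝ) (C' : ℝ)
    (hc0 : ∀ k, 0 ≤ c k) (hx0 : ∀ k, 0 ≤ x k)
    (hcl : Tendsto c atTop (nhds 0))
    (hbd : ∀ n : ℕ, 0 < n → ∑ k ∈ Finset.Icc 1 n, x k ≤ n * C') :
    Tendsto (fun n : ℕ => (1 / (n : ℝ)) * ∑ k ∈ Finset.Icc 1 n, c k * x k)
      atTop (nhds 0) := by
  rw [Metric.tendsto_atTop]
  intro ε hε
  set D : ℝ := max C' 1 with hDdef
  have hD : 0 < D := lt_of_lt_of_le one_pos (le_max_right _ _)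
  have hε' : 0 < ε / (2 * D) := by positivity
  obtain ⟨N₁, hN₁⟩ := Metric.tendsto_atTop.mp hcl (ε / (2 * D)) hε'
  set M : ℝ := ∑ k ∈ Finset.Icc 1 N₁, c k * x k with hMdef
  have hM0 : 0 ≤ M := Finset.sum_nonneg fun k _ => mul_nonneg (hc0 k) (hx0 k)
  obtain ⟨N₂, hN₂⟩ := exists_nat_gt (2 * M / ε)
  refine ⟨max (N₁ + 1) (N₂ + 1), fun n hn => ?_⟩
  have hn1 : N₁ ≤ n := le_trans (Nat.le_succ _) (le_trans (le_max_left _ _) hn)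
  have hn2 : (N₂ : ℕ) < n := lt_of_lt_of_le (Nat.lt_succ_self _)
    (le_trans (le_max_right _ _) hn)
  have hnpos : 0 < n := Nat.lt_of_lt_of_le (Nat.succ_pos _) (le_trans (le_max_left _ _) hn)
  have hnR : (0 : ℝ) < n := by exact_mod_cast hnpos
  -- split the sum
  have hsplit : ∑ k ∈ Finset.Icc 1 n, c k * x k
      = M + ∑ k ∈ Finset.Ioc N₁ n, c k * x k := by
    have e : ∀ m : ℕ, Finset.Icc 1 m = Finset.Ioc 0 m := by
      intro m; ext k; simp [Finset.mem_Icc, Finset.mem_Ioc]; omega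
    rw [hMdef, e, e]
    exact (Finset.sum_Ioc_consecutive _ (Nat.zero_le N₁) hn1).symm
  have htail : ∑ k ∈ Finset.Ioc N₁ n, c k * x k ≤ (ε / (2 * D)) * (n * D) := by
    calc ∑ k ∈ Finset.Ioc N₁ n, c k * x k
        ≤ ∑ k ∈ Finset.Ioc N₁ n, (ε / (2 * D)) * x k := by
          refine Finset.sum_le_sum fun k hk => ?_
          have hk1 : N₁ ≤ k := le_of_lt (Finset.mem_Ioc.mp hk).1
          have := hN₁ k hk1
          rw [Real.dist_eq, sub_zero, abs_of_nonneg (hc0 k)] at this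
          exact mul_le_mul_of_nonneg_right this.le (hx0 k)
      _ = (ε / (2 * D)) * ∑ k ∈ Finset.Ioc N₁ n, x k := by rw [Finset.mul_sum]
      _ ≤ (ε / (2 * D)) * ∑ k ∈ Finset.Icc 1 n, x k := by
          refine mul_le_mul_of_nonneg_left ?_ hε'.le
          refine Finset.sum_le_sum_of_subset_of_nonneg ?_ (fun k _ _ => hx0 k)
          intro k hk
          rcases Finset.mem_Ioc.mp hk with ⟨h1, h2⟩
          exact Finset.mem_Icc.mpr ⟨by omega, h2⟩
      _ ≤ (ε / (2 * D)) * (n * D) := by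
          refine mul_le_mul_of_nonneg_left ?_ hε'.le
          calc ∑ k ∈ Finset.Icc 1 n, x k ≤ n * C' := hbd n hnpos
            _ ≤ n * D := mul_le_mul_of_nonneg_left (le_max_left _ _) hnR.le
  have hsum0 : 0 ≤ ∑ k ∈ Finset.Icc 1 n, c k * x k :=
    Finset.sum_nonneg fun k _ => mul_nonneg (hc0 k) (hx0 k)
  have havg : (1 / (n : ℝ)) * ∑ k ∈ Finset.Icc 1 n, c k * x k ≤ M / n + ε / 2 := by
    rw [hsplit]
    have h1 : (1 / (n : ℝ)) * (M + ∑ k ∈ Finset.Ioc N₁ n, c k * x k)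
        ≤ (1 / (n : ℝ)) * (M + (ε / (2 * D)) * (n * D)) := by
      refine mul_le_mul_of_nonneg_left (by linarith) (by positivity)
    refine h1.trans (le_of_eq ?_)
    field_simp
  have hMn : M / n < ε / 2 := by
    rw [div_lt_iff₀ hnR]
    have : 2 * M / ε < n := lt_of_lt_of_le hN₂ (by exact_mod_cast hn2.le)
    rw [div_lt_iff₀ hε] at this
    linarith
  rw [Real.dist_eq, sub_zero, abs_of_nonneg (by positivity)]
  linarith

/-- Key pointwise estimate in the discrete l'Hôpital rule: if `b n / a n` is
non-increasing with limit `L`, then the positive part `[b'_k - L a'_k]₊` is bounded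
by `(b k / a k - L) * |a'_k|`, and its Cesàro averages tend to `0`. -/
theorem discrete_lhopital_pos_part (a b : ℕ → ℝ) (L C : ℝ)
    (ha : ∀ n, 0 < a n)
    (hmono : Antitone (fun n => b n / a n))
    (hlim : Filter.Tendsto (fun n => b n / a n) Filter.atTop (nhds L))
    (hC : ∀ n : ℕ, 0 < n →
      (1 / (n : ℝ)) * ∑ k ∈ Finset.Icc 1 n, |a (k + 1) - a k| ≤ C) :
    (∀ k : ℕ, max ((b (k + 1) - b k) - L * (a (k + 1) - a k)) 0 ≤
        (b k / a k - L) * |a (k + 1) - a k|) ∧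
    Filter.Tendsto
      (fun n : ℕ => (1 / (n : ℝ)) *
        ∑ k ∈ Finset.Icc 1 n, max ((b (k + 1) - b k) - L * (a (k + 1) - a k)) 0)
      Filter.atTop (nhds 0) := by
  have hL : ∀ k, L ≤ b k / a k := fun k => hmono.le_of_tendsto hlim k
  have hpt : ∀ k : ℕ, max ((b (k + 1) - b k) - L * (a (k + 1) - a k)) 0 ≤
      (b k / a k - L) * |a (k + 1) - a k| := by
    intro k
    have hfac : 0 ≤ b k / a k - L := sub_nonneg.mpr (hL k)
    refine max_le ?_ (mul_nonneg hfac (abs_nonneg _))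
    have hq : b (k + 1) / a (k + 1) ≤ b k / a k := hmono (Nat.le_succ k)
    have hb1 : b (k + 1) ≤ (b k / a k) * a (k + 1) := by
      rw [div_le_div_iff₀ (ha (k + 1)) (ha k)] at hq
      rw [div_mul_eq_mul_div, le_div_iff₀ (ha k)] at *
      nlinarith [ha k, ha (k + 1)]
    have hbk : b k = (b k / a k) * a k := (div_mul_cancel₀ (b k) (ha k).ne').symm
    calc (b (k + 1) - b k) - L * (a (k + 1) - a k)
        ≤ (b k / a k) * a (k + 1) - b k - L * (a (k + 1) - a k) := by linarith
      _ = (b k / a k - L) * (a (k + 1) - a k) := by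
          have hak : a k ≠ 0 := (ha k).ne'
          field_simp
      _ ≤ (b k / a k - L) * |a (k + 1) - a k| :=
          mul_le_mul_of_nonneg_left (le_abs_self _) hfac
  refine ⟨hpt, ?_⟩
  have hcl : Tendsto (fun k => b k / a k - L) atTop (nhds 0) := by
    have := hlim.sub (tendsto_const_nhds : Filter.Tendsto (fun _ : ℕ => L) Filter.atTop (nhds L))
    simpa using this
  have hbd : ∀ n : ℕ, 0 < n → ∑ k ∈ Finset.Icc 1 n, |a (k + 1) - a k| ≤ n * C := by
    intro n hn
    have := hC n hn
    have hnR : (0 : ℝ) < n := by exact_mod_cast hn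
    rw [one_div, inv_mul_le_iff₀ hnR] at this
    linarith
  have hmain := cesaro_null_aux (fun k => |a (k + 1) - a k|) (fun k => b k / a k - L) C
    (fun k => sub_nonneg.mpr (hL k)) (fun k => abs_nonneg _) hcl hbd
  refine squeeze_zero (fun n => ?_) (fun n => ?_) hmain
  · exact mul_nonneg (by positivity)
      (Finset.sum_nonneg fun k _ => le_max_right _ _)
  · refine mul_le_mul_of_nonneg_left (Finset.sum_le_sum fun k _ => hpt k) (by positivity)
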